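/- A semi-normalized basis {e_n} of a Banach space X with associated functionals {f_n} is supershrinking if and only if {x** ∈ X** : lim_n x**(f_n) = 0} equals the canonical image of X in X**. -/

import Mathlib

open Filter Finset NormedSpace

noncomputable section

variable {X : Type*} [NormedAddCommGroup X] [NormedSpace ℝ X]

/-- Partial sums `∑_{i<n} a i • e i`. -/
def PartialSum (e : ℕ → X) (a : ℕ → ℝ) (n : ℕ) : X :=
  ∑ i ∈ Finset.range n, a i • e i

/-- A (Schauder) basic sequence, via the basis-constant inequality. -/
def IsBasicSeq (e : ℕ → X) : Prop :=
  (∀ n, e n ≠ 0) ∧ ∃ K : ℝ, 1 ≤ K ∧ ∀ (a : ℕ → ℝ) (m n : ℕ), m ≤ n →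
    ‖PartialSum e a m‖ ≤ K * ‖PartialSum e a n‖

def SemiNormalized (e : ℕ → X) : Prop :=
  ∃ c C : ℝ, 0 < c ∧ ∀ n, c ≤ ‖e n‖ ∧ ‖e n‖ ≤ C

def BoundedPartialSums (e : ℕ → X) (a : ℕ → ℝ) : Prop :=
  ∃ M : ℝ, ∀ n, ‖PartialSum e a n‖ ≤ M

def SeriesConverges (e : ℕ → X) (a : ℕ → ℝ) : Prop :=
  ∃ x : X, Filter.Tendsto (PartialSum e a) Filter.atTop (nhds x)

def BoundedlyComplete (e : ℕ → X) : Prop :=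
  ∀ a : ℕ → ℝ, BoundedPartialSums e a → SeriesConverges e a

def WeaklyCauchy (e : ℕ → X) : Prop :=
  ∀ f : X →L[ℝ] ℝ, ∃ l : ℝ, Filter.Tendsto (fun n => f (e n)) Filter.atTop (nhds l)

def WeaklyConvergesTo (x : ℕ → X) (l : X) : Prop :=
  ∀ f : X →L[ℝ] ℝ, Filter.Tendsto (fun n => f (x n)) Filter.atTop (nhds (f l))

def StronglySumming (e : ℕ → X) : Prop :=
  WeaklyCauchy e ∧ ∀ a : ℕ → ℝ, BoundedPartialSums e a →
    ∃ s : ℝ, Filter.Tendsto (fun n => ∑ i ∈ Finset.range n, a i) Filter.atTop (nhds s)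

/-- Closed linear span of the tail `{e k : k ≥ n}`. -/
def tailSpan (e : ℕ → X) (n : ℕ) : Submodule ℝ X :=
  (Submodule.span ℝ {x | ∃ k, n ≤ k ∧ x = e k}).topologicalClosure

/-- Shrinking: the norms of a functional restricted to the tail spans tend to `0`. -/
def Shrinking (e : ℕ → X) : Prop :=
  ∀ f : X →L[ℝ] ℝ, ∀ ε > 0, ∃ N, ∀ n ≥ N, ∀ x ∈ tailSpan e n, ‖x‖ ≤ 1 → |f x| ≤ ε

def Supershrinking (e : ℕ → X) : Prop :=
  Shrinking e ∧ ∀ a : ℕ → ℝ, Filter.Tendsto a Filter.atTop (nhds 0) →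
    BoundedPartialSums e a → SeriesConverges e a

/-- Difference sequence: `v 0 = e 0`, `v n = e n - e (n-1)`. -/
def diffSeq (e : ℕ → X) : ℕ → X :=
  fun n => if n = 0 then e 0 else e n - e (n - 1)

def closedSpan (e : ℕ → X) : Submodule ℝ X :=
  (Submodule.span ℝ (Set.range e)).topologicalClosure

/-- A Banach space is reflexive iff the canonical embedding into the bidual is onto. -/
def BanachReflexive (Y : Type*) [NormedAddCommGroup Y] [NormedSpace ℝ Y] : Prop :=
  Function.Surjective (NormedSpace.inclusionInDoubleDual ℝ Y)

/-- Order one quasireflexive: the canonical image of `Y` in `Y**` has codimension 1. -/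
def OrderOneQuasireflexive (Y : Type*) [NormedAddCommGroup Y] [NormedSpace ℝ Y] : Prop :=
  Module.finrank ℝ ((StrongDual ℝ (StrongDual ℝ Y)) ⧸
    LinearMap.range (NormedSpace.inclusionInDoubleDual ℝ Y).toLinearMap) = 1

/-- A Schauder basis of `X` with coordinate functionals `f`. -/
def IsSchauderBasis (e : ℕ → X) (f : ℕ → X →L[ℝ] ℝ) : Prop :=
  (∀ n m, f n (e m) = if n = m then 1 else 0) ∧
  ∀ x : X, Filter.Tendsto (fun n => ∑ i ∈ Finset.range n, f i x • e i)
    Filter.atTop (nhds x)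

/-- `X` contains a sequence equivalent to the unit vector basis of `c₀`
(equivalently, a subspace isomorphic to `c₀`). -/
def ContainsC0 (X : Type*) [NormedAddCommGroup X] [NormedSpace ℝ X] : Prop :=
  ∃ (x : ℕ → X) (c C : ℝ), 0 < c ∧ ∀ (a : ℕ → ℝ) (n : ℕ),
    c * ((Finset.range (n+1)).sup' ⟨n, Finset.self_mem_range_succ n⟩ fun i => |a i|) ≤
        ‖∑ i ∈ Finset.range (n+1), a i • x i‖ ∧
      ‖∑ i ∈ Finset.range (n+1), a i • x i‖ ≤
        C * ((Finset.range (n+1)).sup' ⟨n, Finset.self_mem_range_succ n⟩ fun i => |a i|)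

/-- Equivalence of sequences: same convergent coefficient series. -/
def EquivSeq (e v : ℕ → X) : Prop :=
  ∀ a : ℕ → ℝ, SeriesConverges e a ↔ SeriesConverges v a


lemma stmt4_exists_cluster (u : ℕ → X) (M : ℝ) (hu : ∀ n, ‖u n‖ ≤ M) :
    ∃ F : StrongDual ℝ (StrongDual ℝ X), ∀ g : StrongDual ℝ X,
      ClusterPt (F g) (Filter.map (fun n => g (u n)) Filter.atTop) := by
  set v : ℕ → WeakDual ℝ (StrongDual ℝ X) :=
    fun n => StrongDual.toWeakDual (NormedSpace.inclusionInDoubleDual ℝ X (u n)) with hv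
  have hvmem : ∀ n, v n ∈
      (WeakDual.toStrongDual ⁻¹' Metric.closedBall (0 : StrongDual ℝ (StrongDual ℝ X)) M) := by
    intro n
    simp only [Set.mem_preimage, Metric.mem_closedBall, dist_zero_right]
    exact le_trans ((dist_zero_right (WeakDual.toStrongDual (v n))).trans_le (NormedSpace.double_dual_bound ℝ X (u n))) (hu n)
  have hle : Filter.map v Filter.atTop ≤
      Filter.principal (WeakDual.toStrongDual ⁻¹' Metric.closedBall (0 : StrongDual ℝ (StrongDual ℝ X)) M) :=
    Filter.le_principal_iff.mpr (Filter.mem_map.mpr (Filter.Eventually.of_forall hvmem))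
  obtain ⟨Φ, -, hΦ⟩ :=
    (WeakDual.isCompact_closedBall (𝕜 := ℝ) (E := StrongDual ℝ X)
      (0 : StrongDual ℝ (StrongDual ℝ X)) M).exists_clusterPt hle
  refine ⟨WeakDual.toStrongDual Φ, fun g => ?_⟩
  have hcont : ContinuousAt (fun φ : WeakDual ℝ (StrongDual ℝ X) => φ g) Φ :=
    (WeakDual.eval_continuous g).continuousAt
  have htend : Filter.Tendsto (fun φ : WeakDual ℝ (StrongDual ℝ X) => φ g)
      (Filter.map v Filter.atTop) (Filter.map (fun n => g (u n)) Filter.atTop) := by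
    rw [Filter.tendsto_map'_iff]
    exact Filter.tendsto_map
  exact hΦ.map hcont htend

lemma stmt4_clusterPt_eq {u : ℕ → ℝ} {t c : ℝ}
    (h : ClusterPt t (Filter.map u Filter.atTop))
    (hc : Filter.Tendsto u Filter.atTop (nhds c)) : t = c :=
  eq_of_nhds_neBot (h.mono hc)

lemma stmt4_clusterPt_mem {u : ℕ → ℝ} {t : ℝ} {C : Set ℝ} (hC : IsClosed C)
    (h : ClusterPt t (Filter.map u Filter.atTop)) (hu : ∀ n, u n ∈ C) : t ∈ C := by
  have h2 : ClusterPt t (Filter.principal C) :=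
    h.mono (Filter.le_principal_iff.mpr (Filter.mem_map.mpr (Filter.Eventually.of_forall hu)))
  exact hC.closure_eq ▸ mem_closure_iff_clusterPt.mpr h2

/-- a semi-normalized basis is supershrinking iff
`{x** : lim x**(f n) = 0}` is exactly the canonical image of `X` in `X**`. -/
theorem stmt4 {X : Type*} [NormedAddCommGroup X] [NormedSpace ℝ X] [CompleteSpace X]
    (e : ℕ → X) (f : ℕ → X →L[ℝ] ℝ) (hbasis : IsSchauderBasis e f)
    (hsn : SemiNormalized e) :
    Supershrinking e ↔
      {F : StrongDual ℝ (StrongDual ℝ X) |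
          Filter.Tendsto (fun n => F (f n)) Filter.atTop (nhds 0)} =
        Set.range (NormedSpace.inclusionInDoubleDual ℝ X) := by
  obtain ⟨hortho, hconv⟩ := hbasis
  obtain ⟨c, C, hc, hbd⟩ := hsn
  set S : ℕ → X →L[ℝ] X := fun n => ∑ i ∈ Finset.range n, (f i).smulRight (e i) with hSdef
  have hS : ∀ n x, S n x = ∑ i ∈ Finset.range n, f i x • e i := by
    intro n x
    simp [hSdef, ContinuousLinearMap.sum_apply]
  obtain ⟨K0, hK0⟩ : ∃ K0, ∀ n, ‖S n‖ ≤ K0 := by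
    apply banach_steinhaus
    intro x
    obtain ⟨C', hC'⟩ := (hconv x).norm.bddAbove_range
    refine ⟨C', fun n => ?_⟩
    rw [hS]
    exact hC' ⟨n, rfl⟩
  set K : ℝ := max K0 0 with hKdef
  have hK : ∀ n, ‖S n‖ ≤ K := fun n => le_trans (hK0 n) (le_max_left _ _)
  have hKnn : 0 ≤ K := le_max_right _ _
  have hcoef : ∀ (a : ℕ → ℝ) (k n : ℕ), f k (PartialSum e a n) = if k < n then a k else 0 := by
    intro a k n
    simp only [PartialSum, map_sum, map_smul, hortho, smul_eq_mul, mul_ite, mul_one, mul_zero]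
    simp [Finset.sum_ite_eq, Finset.mem_range]
  have hfx0 : ∀ x : X, Filter.Tendsto (fun n => f n x) Filter.atTop (nhds 0) := by
    intro x
    have h1 : Filter.Tendsto
        (fun n => (∑ i ∈ Finset.range (n + 1), f i x • e i) - ∑ i ∈ Finset.range n, f i x • e i)
        Filter.atTop (nhds (x - x)) :=
      ((hconv x).comp (Filter.tendsto_add_atTop_nat 1)).sub (hconv x)
    have h2 : Filter.Tendsto (fun n => f n x • e n) Filter.atTop (nhds 0) := by
      simpa [Finset.sum_range_succ] using h1
    rw [tendsto_zero_iff_norm_tendsto_zero]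
    have h3 : Filter.Tendsto (fun n => ‖f n x • e n‖ / c) Filter.atTop (nhds 0) := by
      simpa using h2.norm.div_const c
    refine squeeze_zero (fun n => norm_nonneg _) (fun n => ?_) h3
    rw [le_div_iff₀ hc, norm_smul]
    exact mul_le_mul_of_nonneg_left (hbd n).1 (norm_nonneg _)
  have hsub : Set.range (NormedSpace.inclusionInDoubleDual ℝ X) ⊆
      {F : StrongDual ℝ (StrongDual ℝ X) | Filter.Tendsto (fun n => F (f n)) Filter.atTop (nhds 0)} := by
    rintro _ ⟨x, rfl⟩
    simpa [NormedSpace.dual_def] using hfx0 x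
  have hvan : ∀ k N : ℕ, k < N → ∀ z ∈ tailSpan e N, f k z = 0 := by
    intro k N hkN z hz
    have hle : tailSpan e N ≤ LinearMap.ker (f k : X →ₗ[ℝ] ℝ) := by
      apply Submodule.topologicalClosure_minimal
      · rw [Submodule.span_le]
        rintro _ ⟨j, hj, rfl⟩
        simp only [SetLike.mem_coe, LinearMap.mem_ker, ContinuousLinearMap.coe_coe]
        rw [hortho]
        exact if_neg (by omega)
      · exact ContinuousLinearMap.isClosed_ker (f k)
    simpa using hle hz
  have hmono : ∀ {m n : ℕ}, m ≤ n → tailSpan e n ≤ tailSpan e m := by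
    intro m n hmn
    apply Submodule.topologicalClosure_mono
    apply Submodule.span_mono
    rintro _ ⟨k, hk, rfl⟩
    exact ⟨k, le_trans hmn hk, rfl⟩
  constructor
  · -- forward direction
    rintro ⟨hshr, hsup⟩
    refine Set.Subset.antisymm ?_ hsub
    intro F hF
    set a : ℕ → ℝ := fun n => F (f n) with hadef
    have hgS : ∀ (g : StrongDual ℝ X) (n : ℕ),
        g.comp (S n) = ∑ i ∈ Finset.range n, g (e i) • f i := by
      intro g n
      ext y
      simp [hS, map_sum, map_smul, ContinuousLinearMap.sum_apply, smul_eq_mul, mul_comm]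
    have hkey : ∀ (g : StrongDual ℝ X) (n : ℕ), F (g.comp (S n)) = g (PartialSum e a n) := by
      intro g n
      rw [hgS, map_sum, PartialSum, map_sum]
      refine Finset.sum_congr rfl fun i _ => ?_
      rw [map_smul, map_smul]
      simp [smul_eq_mul, mul_comm, hadef]
    have hb : BoundedPartialSums e a := by
      refine ⟨K * ‖F‖, fun n => ?_⟩
      by_cases hy : PartialSum e a n = 0
      · rw [hy, norm_zero]
        positivity
      · obtain ⟨g, hg1, hgx⟩ := exists_dual_vector ℝ (PartialSum e a n) (norm_ne_zero_iff.mpr hy)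
        have hx' : g (PartialSum e a n) = ‖PartialSum e a n‖ := by exact_mod_cast hgx
        calc ‖PartialSum e a n‖ = F (g.comp (S n)) := by rw [hkey, hx']
          _ ≤ |F (g.comp (S n))| := le_abs_self _
          _ ≤ ‖F‖ * ‖g.comp (S n)‖ := by
              simpa [Real.norm_eq_abs] using F.le_opNorm (g.comp (S n))
          _ ≤ ‖F‖ * (‖g‖ * ‖S n‖) :=
            mul_le_mul_of_nonneg_left (ContinuousLinearMap.opNorm_comp_le _ _) (norm_nonneg F)
          _ = ‖F‖ * ‖S n‖ := by rw [hg1, one_mul]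
          _ ≤ ‖F‖ * K := mul_le_mul_of_nonneg_left (hK n) (norm_nonneg F)
          _ = K * ‖F‖ := mul_comm _ _
    obtain ⟨x, hx⟩ := hsup a hF hb
    -- tail membership of remainders
    have htail : ∀ (y : X) (n : ℕ), y - S n y ∈ tailSpan e n := by
      intro y n
      have hmem : ∀ m, n ≤ m → S m y - S n y ∈ tailSpan e n := by
        intro m hm
        have : S m y - S n y = ∑ i ∈ Finset.Ico n m, f i y • e i := by
          rw [hS, hS, Finset.sum_Ico_eq_sub _ hm]
        rw [this]
        apply Submodule.sum_mem
        intro i hi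
        apply Submodule.smul_mem
        apply Submodule.le_topologicalClosure
        exact Submodule.subset_span ⟨i, (Finset.mem_Ico.mp hi).1, rfl⟩
      have hten : Filter.Tendsto (fun m => S m y - S n y) Filter.atTop (nhds (y - S n y)) := by
        have := (hconv y).sub (tendsto_const_nhds (x := S n y) (f := Filter.atTop))
        refine this.congr fun m => by rw [hS m y]
      exact (Submodule.isClosed_topologicalClosure _).mem_of_tendsto hten
        (Filter.eventually_atTop.mpr ⟨n, hmem⟩)
    have hrem : ∀ (y : X) (n : ℕ), ‖y - S n y‖ ≤ (1 + K) * ‖y‖ := by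
      intro y n
      calc ‖y - S n y‖ ≤ ‖y‖ + ‖S n y‖ := norm_sub_le _ _
        _ ≤ ‖y‖ + K * ‖y‖ :=
          add_le_add_right (le_trans ((S n).le_opNorm y)
            (mul_le_mul_of_nonneg_right (hK n) (norm_nonneg y))) _
        _ = (1 + K) * ‖y‖ := by ring
    -- g.comp (S n) → g in norm
    have hdual : ∀ g : StrongDual ℝ X, Filter.Tendsto (fun n => g.comp (S n)) Filter.atTop (nhds g) := by
      intro g
      rw [Metric.tendsto_atTop]
      intro ε hε
      have h1K : (0:ℝ) < 1 + K := by linarith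
      have hδ : 0 < ε / (2 * (1 + K)) := by positivity
      obtain ⟨N, hN⟩ := hshr g (ε / (2 * (1 + K))) hδ
      refine ⟨N, fun n hn => ?_⟩
      rw [dist_eq_norm]
      have hsmall : ∀ z ∈ tailSpan e n, ∀ r : ℝ, 0 ≤ r → ‖z‖ ≤ r →
          |g z| ≤ (ε / (2 * (1 + K))) * r := by
        intro z hz r hr hzr
        rcases eq_or_lt_of_le hr with hr0 | hr0
        · have : z = 0 := norm_le_zero_iff.mp (hr0 ▸ hzr)
          simp [this, ← hr0]
        · have hmem : (r⁻¹ • z) ∈ tailSpan e n := Submodule.smul_mem _ _ hz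
          have hn1 : ‖r⁻¹ • z‖ ≤ 1 := by
            rw [norm_smul, norm_inv, Real.norm_eq_abs, abs_of_pos hr0]
            rw [inv_mul_le_iff₀ hr0, mul_one]
            exact hzr
          have := hN n hn (r⁻¹ • z) hmem hn1
          rw [map_smul, smul_eq_mul, abs_mul, abs_inv, abs_of_pos hr0] at this
          calc |g z| = r * (r⁻¹ * |g z|) := by field_simp
            _ ≤ r * (ε / (2 * (1 + K))) := mul_le_mul_of_nonneg_left this (le_of_lt hr0)
            _ = (ε / (2 * (1 + K))) * r := mul_comm _ _
      have hbound : ‖g.comp (S n) - g‖ ≤ ε / 2 := by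
        apply ContinuousLinearMap.opNorm_le_bound _ (by positivity)
        intro y
        have h1 : (g.comp (S n) - g) y = -(g (y - S n y)) := by
          simp [map_sub]
        rw [h1, norm_neg, Real.norm_eq_abs]
        calc |g (y - S n y)| ≤ (ε / (2 * (1 + K))) * ((1 + K) * ‖y‖) :=
              hsmall _ (htail y n) _ (by positivity) (hrem y n)
          _ = ε / 2 * ‖y‖ := by field_simp
      linarith [hbound]
    -- conclude F = J x
    refine ⟨x, ?_⟩
    ext g
    have h1 : Filter.Tendsto (fun n => F (g.comp (S n))) Filter.atTop (nhds (g x)) := by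
      refine Filter.Tendsto.congr (fun n => (hkey g n).symm) ?_
      exact (g.continuous.tendsto x).comp hx
    have h2 : Filter.Tendsto (fun n => F (g.comp (S n))) Filter.atTop (nhds (F g)) :=
      (F.continuous.tendsto g).comp (hdual g)
    rw [NormedSpace.dual_def]
    exact tendsto_nhds_unique h1 h2
  · -- backward direction
    intro heq
    constructor
    · -- shrinking
      by_contra hns
      unfold Shrinking at hns
      push_neg at hns
      obtain ⟨g, ε, hε, hg⟩ := hns
      choose n hn x hx hxn hgx using hg
      have hu : ∀ N, ‖x N‖ ≤ 1 := hxn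
      obtain ⟨F, hF⟩ := stmt4_exists_cluster x 1 hu
      have hFk : ∀ k, F (f k) = 0 := by
        intro k
        refine stmt4_clusterPt_eq (hF (f k)) ?_
        refine tendsto_const_nhds.congr' ?_
        filter_upwards [Filter.eventually_ge_atTop (k + 1)] with N hN
        exact (hvan k N (by omega) (x N) (hmono (hn N) (hx N))).symm
      have hmemset : F ∈ {F : StrongDual ℝ (StrongDual ℝ X) |
          Filter.Tendsto (fun n => F (f n)) Filter.atTop (nhds 0)} := by
        simp only [Set.mem_setOf_eq]
        refine tendsto_const_nhds.congr fun n => (hFk n).symm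
      rw [heq] at hmemset
      obtain ⟨x₀, hx₀⟩ := hmemset
      have hx0 : x₀ = 0 := by
        have hcoef0 : ∀ k, f k x₀ = 0 := by
          intro k
          have := hFk k
          rw [← hx₀, NormedSpace.dual_def] at this
          exact this
        have : Filter.Tendsto (fun n => ∑ i ∈ Finset.range n, f i x₀ • e i)
            Filter.atTop (nhds 0) := by
          refine tendsto_const_nhds.congr fun n => ?_
          simp [hcoef0]
        exact tendsto_nhds_unique (hconv x₀) this
      have hFg0 : F g = 0 := by
        rw [← hx₀, NormedSpace.dual_def, hx0, map_zero]
      have hclosed : IsClosed {t : ℝ | ε ≤ |t|} :=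
        isClosed_Ici.preimage continuous_abs
      have : F g ∈ {t : ℝ | ε ≤ |t|} :=
        stmt4_clusterPt_mem hclosed (hF g) fun N => le_of_lt (hgx N)
      rw [hFg0] at this
      simp only [Set.mem_setOf_eq, abs_zero] at this
      linarith
    · -- boundedly complete on null sequences
      intro a ha hbps
      obtain ⟨M, hM⟩ := hbps
      obtain ⟨F, hF⟩ := stmt4_exists_cluster (PartialSum e a) M hM
      have hFk : ∀ k, F (f k) = a k := by
        intro k
        refine stmt4_clusterPt_eq (hF (f k)) ?_
        refine tendsto_const_nhds.congr' ?_
        filter_upwards [Filter.eventually_ge_atTop (k + 1)] with N hN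
        rw [hcoef a k N, if_pos (by omega)]
      have hmemset : F ∈ {F : StrongDual ℝ (StrongDual ℝ X) |
          Filter.Tendsto (fun n => F (f n)) Filter.atTop (nhds 0)} := by
        simp only [Set.mem_setOf_eq]
        exact ha.congr fun n => (hFk n).symm
      rw [heq] at hmemset
      obtain ⟨x₀, hx₀⟩ := hmemset
      refine ⟨x₀, ?_⟩
      have hak : ∀ k, a k = f k x₀ := by
        intro k
        rw [← hFk k, ← hx₀, NormedSpace.dual_def]
      refine (hconv x₀).congr fun n => ?_
      unfold PartialSum
      exact Finset.sum_congr rfl fun i _ => by rw [hak i]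

end
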